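/- Let ≤ be a well-quasi-ordering on a set X. Then the relation ≤^⋄ on the set of finite multisets over X, defined by s ≤^⋄ t iff there exists a submultiset t' of t with the same cardinality as s together with a bijective matching of s with t' such that each element of s is ≤ its matched element of t', is a well-quasi-ordering. -/

import Mathlib

/-- **Higman's lemma for multisets.** If `r` is a well-quasi-ordering on
`X`, then the relation on finite multisets over `X` given by "`s ≤⋄ t` iff there is a
submultiset `t'` of `t` and a bijective matching of `s` with `t'` such that every element
of `s` is `r`-below its partner" is a well-quasi-ordering. -/
theorem stmt4 {X : Type*} (r : X → X → Prop)
    (hrefl : ∀ x : X, r x x)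
    (htrans : ∀ x y z : X, r x y → r y z → r x z)
    (hwqo : ∀ f : ℕ → X, ∃ i j : ℕ, i < j ∧ r (f i) (f j)) :
    ∀ F : ℕ → Multiset X, ∃ i j : ℕ, i < j ∧
      ∃ t' : Multiset X, t' ≤ F j ∧ Multiset.Rel r (F i) t' := by
  intro F
  haveI : IsRefl X r := ⟨hrefl⟩
  haveI : IsTrans X r := ⟨htrans⟩
  have hpwo : (Set.univ : Set X).PartiallyWellOrderedOn r := by
    rw [Set.partiallyWellOrderedOn_iff_exists_lt]
    intro f _
    exact hwqo f
  haveI : IsPreorder X r := { refl := hrefl, trans := htrans }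
  have H := Set.partiallyWellOrderedOn_iff_exists_lt.1 (hpwo.partiallyWellOrderedOn_sublistForall₂ r)
  obtain ⟨i, j, hij, hrel⟩ := H (fun n => (F n).toList) (fun n x _ => Set.mem_univ x)
  obtain ⟨l, hforall, hsub⟩ := List.sublistForall₂_iff.1 hrel
  refine ⟨i, j, hij, (l : Multiset X), ?_, ?_⟩
  · rw [← Multiset.coe_toList (F j)]
    exact Multiset.coe_le.2 hsub.subperm
  · have : ∀ (l₁ l₂ : List X), List.Forall₂ r l₁ l₂ → Multiset.Rel r ↑l₁ ↑l₂ := by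
      intro l₁ l₂ h
      induction h with
      | nil => exact Multiset.Rel.zero
      | cons h _ ih => exact Multiset.Rel.cons h ih
    rw [← Multiset.coe_toList (F i)]
    exact this _ _ hforall
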